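/- For S in U_r and S' in U_r, the set D̄(S,S') of all a > 0 such that the upper density of Δ_a(S,S') is at most a is a half line unbounded to the right, and the function d̄(S,S') = min(r/2, inf D̄(S,S')) is a translation-invariant pseudometric on U_r. -/

import Mathlib

open Metric Set Pointwise Filter MeasureTheory ENNReal

variable {n : ℕ}

/-- `S` is uniformly discrete with parameter `r`. -/
def UniformlyDiscreteSet (r : ℝ) (S : Set (EuclideanSpace ℝ (Fin n))) : Prop :=
  ∀ x ∈ S, ∀ y ∈ S, x ≠ y → r ≤ dist x y

/-- The translation `S - t`. -/
def translateSet (t : EuclideanSpace ℝ (Fin n))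
    (S : Set (EuclideanSpace ℝ (Fin n))) : Set (EuclideanSpace ℝ (Fin n)) :=
  (fun x => x - t) '' S

/-- The upper density `dens⁺(A) = limsup_{R→∞} card(A ∩ B_R)/|B_R|`. -/
noncomputable def densSup (A : Set (EuclideanSpace ℝ (Fin n))) : ℝ≥0∞ :=
  limsup (fun R : ℝ =>
    ((A ∩ closedBall (0 : EuclideanSpace ℝ (Fin n)) R).ncard : ℝ≥0∞) /
      volume (closedBall (0 : EuclideanSpace ℝ (Fin n)) R)) atTop

/-- `Δ̃_a(S,S') = {x ∈ S : (x + B_a) ∩ S' = ∅}`. -/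
def deltaTilde (a : ℝ) (S S' : Set (EuclideanSpace ℝ (Fin n))) :
    Set (EuclideanSpace ℝ (Fin n)) :=
  {x ∈ S | ({x} + closedBall (0 : EuclideanSpace ℝ (Fin n)) a) ∩ S' = ∅}

/-- `Δ_a(S,S') = Δ̃_a(S,S') ∪ Δ̃_a(S',S)`. -/
def delta (a : ℝ) (S S' : Set (EuclideanSpace ℝ (Fin n))) :
    Set (EuclideanSpace ℝ (Fin n)) :=
  deltaTilde a S S' ∪ deltaTilde a S' S

/-- `D̄(S,S') = {a > 0 : dens⁺(Δ_a(S,S')) ≤ a}`. -/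
def DbarSet (S S' : Set (EuclideanSpace ℝ (Fin n))) : Set ℝ :=
  {a : ℝ | 0 < a ∧ densSup (delta a S S') ≤ ENNReal.ofReal a}

/-- `d̄(S,S') = min (r/2, inf D̄(S,S'))`. -/
noncomputable def dbar (r : ℝ) (S S' : Set (EuclideanSpace ℝ (Fin n))) : ℝ :=
  sInf (insert (r / 2) (DbarSet S S'))

open Topology

local notation "E" => EuclideanSpace ℝ (Fin n)

/-- Membership in `deltaTilde` in terms of distances. -/
lemma mem_deltaTilde_iff {a : ℝ} {S S' : Set E} {x : E} :
    x ∈ deltaTilde a S S' ↔ x ∈ S ∧ ∀ y ∈ S', ¬ dist y x ≤ a := by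
  have hball : ({x} + closedBall (0 : E) a) = closedBall x a := by
    rw [singleton_add_closedBall, add_zero]
  constructor
  · rintro ⟨hxS, hempty⟩
    rw [hball] at hempty
    refine ⟨hxS, fun y hy hd => ?_⟩
    have : y ∈ closedBall x a ∩ S' := ⟨mem_closedBall.mpr hd, hy⟩
    rw [hempty] at this
    exact this
  · rintro ⟨hxS, h⟩
    refine ⟨hxS, ?_⟩
    rw [hball, Set.eq_empty_iff_forall_notMem]
    rintro y ⟨hy1, hy2⟩
    exact h y hy2 (mem_closedBall.mp hy1)

/-- A uniformly discrete set meets every closed ball in a finite set. -/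
lemma UniformlyDiscreteSet.finite_inter {r : ℝ} (hr : 0 < r) {S : Set E}
    (hS : UniformlyDiscreteSet r S) (R : ℝ) : (S ∩ closedBall 0 R).Finite := by
  by_contra hinf
  replace hinf : (S ∩ closedBall (0:E) R).Infinite := hinf
  set v := volume (closedBall (0 : E) (r / 3)) with hv
  have hv0 : v ≠ 0 := (measure_closedBall_pos volume _ (by linarith)).ne'
  have hvt : v ≠ ⊤ := measure_closedBall_lt_top.ne
  set M := volume (closedBall (0 : E) (R + r / 3)) with hM
  have hMt : M ≠ ⊤ := measure_closedBall_lt_top.ne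
  obtain ⟨k, hk⟩ := ENNReal.exists_nat_gt (ENNReal.div_lt_top hMt hv0).ne
  obtain ⟨F, hFsub, hFcard⟩ := hinf.exists_subset_card_eq k
  have hdisj : (F : Set E).PairwiseDisjoint fun x => closedBall x (r / 3) := by
    intro x hx y hy hxy
    exact closedBall_disjoint_closedBall
      (lt_of_lt_of_le (by linarith) (hS x (hFsub hx).1 y (hFsub hy).1 hxy))
  have hmeas : volume (⋃ x ∈ F, closedBall x (r / 3)) = ∑ x ∈ F, volume (closedBall x (r / 3)) :=
    measure_biUnion_finset hdisj fun x _ => measurableSet_closedBall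
  have hsum : ∑ x ∈ F, volume (closedBall x (r / 3)) = (k : ℝ≥0∞) * v := by
    rw [Finset.sum_congr rfl fun x _ => Measure.addHaar_closedBall_center volume x (r / 3)]
    rw [Finset.sum_const, hFcard, nsmul_eq_mul]
  have hsub : (⋃ x ∈ F, closedBall x (r / 3)) ⊆ closedBall (0 : E) (R + r / 3) := by
    intro z hz
    simp only [Set.mem_iUnion] at hz
    obtain ⟨x, hx, hzx⟩ := hz
    have hxR : dist x 0 ≤ R := (hFsub hx).2
    have := dist_triangle z x 0
    simp only [mem_closedBall] at *
    linarith
  have hle : (k : ℝ≥0∞) * v ≤ M := by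
    rw [← hsum, ← hmeas]; exact measure_mono hsub
  have : M < (k : ℝ≥0∞) * v := (ENNReal.div_lt_iff (Or.inl hv0) (Or.inl hvt)).mp hk
  exact absurd hle this.not_ge

lemma densSup_mono {A B : Set E} (hBfin : ∀ R : ℝ, (B ∩ closedBall 0 R).Finite)
    (hAB : A ⊆ B) : densSup A ≤ densSup B := by
  refine limsup_le_limsup (Eventually.of_forall fun R => ?_)
  exact ENNReal.div_le_div_right
    (by exact_mod_cast Set.ncard_le_ncard (inter_subset_inter_left _ hAB) (hBfin R)) _

lemma ennreal_limsup_add_le {α : Type*} {f : Filter α} (u v : α → ℝ≥0∞) :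
    limsup (fun x => u x + v x) f ≤ limsup u f + limsup v f := by
  by_cases hu : limsup u f = ⊤
  · simp [hu]
  by_cases hv : limsup v f = ⊤
  · simp [hv]
  refine ENNReal.le_of_forall_pos_le_add fun ε hε _ => ?_
  have hε2 : ((ε : ℝ≥0∞) / 2) ≠ 0 := by
    simp [ENNReal.div_eq_zero_iff, hε.ne']
  have hu' : ∀ᶠ x in f, u x < limsup u f + (ε : ℝ≥0∞) / 2 :=
    eventually_lt_of_limsup_lt (ENNReal.lt_add_right hu hε2)
  have hv' : ∀ᶠ x in f, v x < limsup v f + (ε : ℝ≥0∞) / 2 :=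
    eventually_lt_of_limsup_lt (ENNReal.lt_add_right hv hε2)
  refine limsup_le_of_le (by isBoundedDefault) ?_
  filter_upwards [hu', hv'] with x h1 h2
  calc u x + v x ≤ (limsup u f + (ε : ℝ≥0∞) / 2) + (limsup v f + (ε : ℝ≥0∞) / 2) :=
        add_le_add h1.le h2.le
    _ = limsup u f + limsup v f + ε := by
        rw [add_add_add_comm, ENNReal.add_halves]

lemma densSup_union_le {A B : Set E} (hAfin : ∀ R : ℝ, (A ∩ closedBall 0 R).Finite)
    (hBfin : ∀ R : ℝ, (B ∩ closedBall 0 R).Finite) :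
    densSup (A ∪ B) ≤ densSup A + densSup B := by
  refine le_trans (limsup_le_limsup (Eventually.of_forall fun R => ?_))
    (ennreal_limsup_add_le _ _)
  have h1 : ((A ∪ B) ∩ closedBall (0:E) R).ncard ≤
      (A ∩ closedBall (0:E) R).ncard + (B ∩ closedBall (0:E) R).ncard := by
    rw [Set.union_inter_distrib_right]
    exact Set.ncard_union_le _ _
  calc ((A ∪ B) ∩ closedBall (0:E) R).ncard / volume (closedBall (0:E) R)
      ≤ (((A ∩ closedBall (0:E) R).ncard + (B ∩ closedBall (0:E) R).ncard : ℕ) : ℝ≥0∞) /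
        volume (closedBall (0:E) R) := ENNReal.div_le_div_right (by exact_mod_cast h1) _
    _ = _ := by
        push_cast
        rw [ENNReal.add_div]

lemma volume_ratio_tendsto {c : ℝ} (hc : 0 ≤ c) :
    Tendsto (fun R : ℝ => volume (closedBall (0:E) (R + c)) / volume (closedBall (0:E) R))
      atTop (𝓝 1) := by
  have hreal : Tendsto (fun R : ℝ => ((R + c) / R) ^ n) atTop (𝓝 1) := by
    have h0 : Tendsto (fun R : ℝ => (R + c) / R) atTop (𝓝 1) := by
      have hd : Tendsto (fun R : ℝ => c / R) atTop (𝓝 0) :=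
        Tendsto.div_atTop tendsto_const_nhds tendsto_id
      have : Tendsto (fun R : ℝ => 1 + c / R) atTop (𝓝 (1 + 0)) :=
        tendsto_const_nhds.add hd
      rw [add_zero] at this
      refine this.congr' ?_
      filter_upwards [eventually_gt_atTop (0:ℝ)] with R hR
      field_simp
    simpa using h0.pow n
  have h1 : Tendsto (fun R : ℝ => ENNReal.ofReal (((R + c) / R) ^ n)) atTop (𝓝 1) := by
    simpa using ENNReal.tendsto_ofReal hreal
  refine Tendsto.congr' ?_ h1
  filter_upwards [eventually_gt_atTop (0:ℝ)] with R hR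
  have hm0 : volume (closedBall (0:E) 1) ≠ 0 := (measure_closedBall_pos volume _ one_pos).ne'
  have hmt : volume (closedBall (0:E) 1) ≠ ⊤ := measure_closedBall_lt_top.ne
  rw [Measure.addHaar_closedBall' volume _ (by linarith : (0:ℝ) ≤ R + c),
    Measure.addHaar_closedBall' volume _ hR.le, finrank_euclideanSpace_fin,
    ENNReal.mul_div_mul_right _ _ hm0 hmt, div_pow,
    ENNReal.ofReal_div_of_pos (pow_pos hR n)]

lemma densSup_le_of_ncard_le {A B : Set E} {c : ℝ} (hc : 0 ≤ c)
    (h : ∀ R : ℝ, 1 ≤ R → (A ∩ closedBall 0 R).ncard ≤ (B ∩ closedBall 0 (R + c)).ncard) :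
    densSup A ≤ densSup B := by
  set g : ℝ → ℝ≥0∞ :=
    fun R => ((B ∩ closedBall (0:E) R).ncard : ℝ≥0∞) / volume (closedBall (0:E) R) with hg
  set ratio : ℝ → ℝ≥0∞ :=
    fun R => volume (closedBall (0:E) (R + c)) / volume (closedBall (0:E) R) with hratiodef
  have hlimratio : limsup ratio atTop = 1 := (volume_ratio_tendsto hc).limsup_eq
  have hshift : limsup (fun R : ℝ => g (R + c)) atTop = limsup g atTop := by
    have hmap : Filter.map (fun R : ℝ => R + c) atTop = atTop :=
      (OrderIso.addRight c).map_atTop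
    have : (fun R : ℝ => g (R + c)) = g ∘ (fun R : ℝ => R + c) := rfl
    rw [this, limsup_comp, hmap]
  have hev : (fun R : ℝ =>
        ((A ∩ closedBall (0:E) R).ncard : ℝ≥0∞) / volume (closedBall (0:E) R)) ≤ᶠ[atTop]
      (fun R : ℝ => g (R + c)) * ratio := by
    filter_upwards [eventually_ge_atTop (1:ℝ)] with R hR
    have hvol0 : volume (closedBall (0:E) (R + c)) ≠ 0 :=
      (measure_closedBall_pos volume _ (by linarith)).ne'
    have hvolt : volume (closedBall (0:E) (R + c)) ≠ ⊤ := measure_closedBall_lt_top.ne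
    have heq : g (R + c) * ratio R =
        ((B ∩ closedBall (0:E) (R + c)).ncard : ℝ≥0∞) / volume (closedBall (0:E) R) := by
      simp only [hg, hratiodef, div_eq_mul_inv]
      calc ((B ∩ closedBall (0:E) (R + c)).ncard : ℝ≥0∞) *
            (volume (closedBall (0:E) (R+c)))⁻¹ *
            (volume (closedBall (0:E) (R+c)) * (volume (closedBall (0:E) R))⁻¹)
          = ((B ∩ closedBall (0:E) (R + c)).ncard : ℝ≥0∞) *
            (volume (closedBall (0:E) R))⁻¹ *
            ((volume (closedBall (0:E) (R+c)))⁻¹ * volume (closedBall (0:E) (R+c))) := by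
            ring
        _ = _ := by rw [ENNReal.inv_mul_cancel hvol0 hvolt, mul_one]
    show _ ≤ g (R + c) * ratio R
    rw [heq]
    exact ENNReal.div_le_div_right (by exact_mod_cast h R hR) _
  calc densSup A ≤ limsup ((fun R : ℝ => g (R + c)) * ratio) atTop := limsup_le_limsup hev
    _ ≤ limsup (fun R : ℝ => g (R + c)) atTop * limsup ratio atTop :=
        limsup_mul_le' (by rw [hlimratio]; exact Or.inr one_ne_top)
          (by rw [hlimratio]; exact Or.inr one_ne_zero)
    _ = densSup B := by rw [hlimratio, hshift, mul_one]; rfl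

lemma mem_translateSet_iff {u x : E} {A : Set E} : x ∈ translateSet u A ↔ x + u ∈ A := by
  constructor
  · rintro ⟨y, hy, rfl⟩; simpa using hy
  · intro h; exact ⟨x + u, h, by simp⟩

lemma translateSet_translateSet (u v : E) (A : Set E) :
    translateSet v (translateSet u A) = translateSet (u + v) A := by
  ext x
  rw [mem_translateSet_iff, mem_translateSet_iff, mem_translateSet_iff]
  constructor
  · intro h; have : x + v + u = x + (u + v) := by abel
    rwa [← this]
  · intro h; have : x + v + u = x + (u + v) := by abel
    rwa [this]

lemma translateSet_zero (A : Set E) : translateSet 0 A = A := by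
  ext x; rw [mem_translateSet_iff, add_zero]

lemma UniformlyDiscreteSet.translate {r : ℝ} {S : Set E} (hS : UniformlyDiscreteSet r S)
    (u : E) : UniformlyDiscreteSet r (translateSet u S) := by
  intro x hx y hy hxy
  rw [mem_translateSet_iff] at hx hy
  have : dist x y = dist (x + u) (y + u) := by
    rw [dist_eq_norm, dist_eq_norm]; congr 1; abel
  rw [this]
  exact hS _ hx _ hy (by intro h; apply hxy; simpa using h)

lemma deltaTilde_translate (a : ℝ) (u : E) (S S' : Set E) :
    deltaTilde a (translateSet u S) (translateSet u S') = translateSet u (deltaTilde a S S') := by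
  ext x
  rw [mem_translateSet_iff, mem_deltaTilde_iff, mem_deltaTilde_iff, mem_translateSet_iff]
  constructor
  · rintro ⟨hxS, h⟩
    refine ⟨hxS, fun y hy hd => ?_⟩
    refine h (y - u) (mem_translateSet_iff.mpr (by simpa using hy)) ?_
    rw [dist_eq_norm] at hd ⊢
    convert hd using 2
    abel
  · rintro ⟨hxS, h⟩
    refine ⟨hxS, fun y hy hd => ?_⟩
    rw [mem_translateSet_iff] at hy
    refine h (y + u) hy ?_
    rw [dist_eq_norm] at hd ⊢
    convert hd using 2
    abel

lemma delta_translate (a : ℝ) (u : E) (S S' : Set E) :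
    delta a (translateSet u S) (translateSet u S') = translateSet u (delta a S S') := by
  unfold delta
  rw [deltaTilde_translate, deltaTilde_translate]
  unfold translateSet
  rw [← Set.image_union]

lemma densSup_translate_le (u : E) {A : Set E}
    (hAfin : ∀ R : ℝ, (A ∩ closedBall 0 R).Finite) :
    densSup (translateSet u A) ≤ densSup A := by
  refine densSup_le_of_ncard_le (c := ‖u‖) (norm_nonneg u) fun R hR => ?_
  refine Set.ncard_le_ncard_of_injOn (fun x => x + u) ?_ ?_ (hAfin (R + ‖u‖))
  · rintro x ⟨hx, hxball⟩
    refine ⟨mem_translateSet_iff.mp hx, ?_⟩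
    rw [mem_closedBall_zero_iff] at hxball ⊢
    calc ‖x + u‖ ≤ ‖x‖ + ‖u‖ := norm_add_le _ _
      _ ≤ R + ‖u‖ := by linarith
  · exact fun x _ y _ h => by simpa using h

lemma deltaTilde_subset (a : ℝ) (S S' : Set E) : deltaTilde a S S' ⊆ S := fun _ h => h.1

lemma delta_subset (a : ℝ) (S S' : Set E) : delta a S S' ⊆ S ∪ S' := by
  rintro x (h | h)
  · exact Or.inl h.1
  · exact Or.inr h.1

lemma delta_inter_finite {r : ℝ} (hr : 0 < r) {S S' : Set E}
    (hS : UniformlyDiscreteSet r S) (hS' : UniformlyDiscreteSet r S') (a : ℝ) :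
    ∀ R : ℝ, (delta a S S' ∩ closedBall 0 R).Finite := by
  intro R
  refine ((hS.finite_inter hr R).union (hS'.finite_inter hr R)).subset ?_
  rintro x ⟨hx, hball⟩
  rcases delta_subset a S S' hx with h | h
  · exact Or.inl ⟨h, hball⟩
  · exact Or.inr ⟨h, hball⟩

lemma delta_anti {a b : ℝ} (hab : a ≤ b) (S S' : Set E) : delta b S S' ⊆ delta a S S' := by
  have key : ∀ T T' : Set E, deltaTilde b T T' ⊆ deltaTilde a T T' := by
    intro T T' x hx
    rw [mem_deltaTilde_iff] at hx ⊢
    exact ⟨hx.1, fun y hy hd => hx.2 y hy (hd.trans hab)⟩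
  rintro x (h | h)
  · exact Or.inl (key _ _ h)
  · exact Or.inr (key _ _ h)

lemma densSup_empty : densSup (∅ : Set E) = 0 := by
  have : (fun R : ℝ => (((∅ : Set E) ∩ closedBall (0 : E) R).ncard : ℝ≥0∞) /
      volume (closedBall (0 : E) R)) = fun _ => 0 := by
    funext R
    simp
  unfold densSup
  rw [this, limsup_const]

lemma ncard_delta_triangle_le {r a b : ℝ} {S S' S'' : Set E}
    (hS : UniformlyDiscreteSet r S) (hS'' : UniformlyDiscreteSet r S'')
    (ha : 0 < a) (hb : 0 < b) (ha2 : a < r / 2) (hb2 : b < r / 2)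
    (hfin : ∀ R : ℝ, ((delta a S S' ∪ delta b S' S'') ∩ closedBall 0 R).Finite) (R : ℝ) :
    (delta (a + b) S S'' ∩ closedBall 0 R).ncard ≤
      ((delta a S S' ∪ delta b S' S'') ∩ closedBall 0 (R + max a b)).ncard := by
  set T := delta (a + b) S S'' ∩ closedBall (0 : E) R with hT
  set U := (delta a S S' ∪ delta b S' S'') ∩ closedBall (0 : E) (R + max a b) with hU
  -- the property tracking how x is matched to y
  set P : E → E → Prop := fun x y =>
    y = x ∨ (dist x y ≤ a ∧ x ∈ deltaTilde (a + b) S S'' ∧ y ∈ S') ∨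
      (dist x y ≤ b ∧ x ∈ deltaTilde (a + b) S'' S ∧ y ∈ S') with hP
  have hex : ∀ x ∈ T, ∃ y, y ∈ U ∧ P x y := by
    rintro x ⟨hxd, hxball⟩
    rw [mem_closedBall_zero_iff] at hxball
    by_cases hx : x ∈ delta a S S' ∪ delta b S' S''
    · refine ⟨x, ⟨hx, ?_⟩, Or.inl rfl⟩
      rw [mem_closedBall_zero_iff]
      have : (0 : ℝ) ≤ max a b := le_max_of_le_left ha.le
      linarith
    · rcases hxd with hxd | hxd
      · -- x ∈ Δ̃_{a+b}(S,S'')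
        obtain ⟨hxS, hxe⟩ := mem_deltaTilde_iff.mp hxd
        have hx1 : x ∉ deltaTilde a S S' := fun h => hx (Or.inl (Or.inl h))
        rw [mem_deltaTilde_iff] at hx1
        push_neg at hx1
        obtain ⟨y, hyS', hdy⟩ := hx1 hxS
        have hyd : y ∈ deltaTilde b S' S'' := by
          rw [mem_deltaTilde_iff]
          refine ⟨hyS', fun z hz hdz => ?_⟩
          refine hxe z hz ?_
          calc dist z x ≤ dist z y + dist y x := dist_triangle _ _ _
            _ ≤ a + b := by linarith
        refine ⟨y, ⟨Or.inr (Or.inl hyd), ?_⟩, Or.inr (Or.inl ⟨by rw [dist_comm]; exact hdy,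
          hxd, hyS'⟩)⟩
        rw [mem_closedBall_zero_iff]
        have : ‖y‖ ≤ ‖x‖ + a := by
          have := dist_triangle y x 0
          simp only [dist_zero_right] at this
          linarith
        have hma : a ≤ max a b := le_max_left a b
        linarith
      · -- x ∈ Δ̃_{a+b}(S'',S)
        obtain ⟨hxS'', hxe⟩ := mem_deltaTilde_iff.mp hxd
        have hx1 : x ∉ deltaTilde b S'' S' := fun h => hx (Or.inr (Or.inr h))
        rw [mem_deltaTilde_iff] at hx1
        push_neg at hx1
        obtain ⟨y, hyS', hdy⟩ := hx1 hxS''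
        have hyd : y ∈ deltaTilde a S' S := by
          rw [mem_deltaTilde_iff]
          refine ⟨hyS', fun z hz hdz => ?_⟩
          refine hxe z hz ?_
          calc dist z x ≤ dist z y + dist y x := dist_triangle _ _ _
            _ ≤ a + b := by linarith
        refine ⟨y, ⟨Or.inl (Or.inr hyd), ?_⟩, Or.inr (Or.inr ⟨by rw [dist_comm]; exact hdy,
          hxd, hyS'⟩)⟩
        rw [mem_closedBall_zero_iff]
        have : ‖y‖ ≤ ‖x‖ + b := by
          have := dist_triangle y x 0
          simp only [dist_zero_right] at this
          linarith
        have hmb : b ≤ max a b := le_max_right a b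
        linarith
  classical
  set f : E → E := fun x => if h : x ∈ T then Classical.choose (hex x h) else x with hf
  have hfU : ∀ x ∈ T, f x ∈ U := by
    intro x hx
    rw [hf]
    simp only [dif_pos hx]
    exact (Classical.choose_spec (hex x hx)).1
  have hfP : ∀ x (hx : x ∈ T), P x (f x) := by
    intro x hx
    rw [hf]
    simp only [dif_pos hx]
    exact (Classical.choose_spec (hex x hx)).2
  have hrr : a + b < r := by linarith
  have hinj : Set.InjOn f T := by
    have main : ∀ x₁ ∈ T, ∀ x₂ ∈ T, ∀ y : E, P x₁ y → P x₂ y → x₁ = x₂ := by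
      intro x₁ hx₁ x₂ hx₂ y h1 h2
      by_contra hne
      have hSS : ∀ z w : E, z ∈ S → w ∈ S → z ≠ w → dist z w < r → False :=
        fun z w hz hw hzw hlt => absurd (hS z hz w hw hzw) (not_le.mpr hlt)
      have hSS'' : ∀ z w : E, z ∈ S'' → w ∈ S'' → z ≠ w → dist z w < r → False :=
        fun z w hz hw hzw hlt => absurd (hS'' z hz w hw hzw) (not_le.mpr hlt)
      have hcross : ∀ z w : E, z ∈ deltaTilde (a + b) S S'' → w ∈ S'' →
          dist w z ≤ a + b → False :=
        fun z w hz hw hd => (mem_deltaTilde_iff.mp hz).2 w hw hd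
      have hcross' : ∀ z w : E, z ∈ deltaTilde (a + b) S'' S → w ∈ S →
          dist w z ≤ a + b → False :=
        fun z w hz hw hd => (mem_deltaTilde_iff.mp hz).2 w hw hd
      rcases h1 with rfl | ⟨hda1, hx1d, hyS1⟩ | ⟨hdb1, hx1d, hyS1⟩
      · -- y = x₁ (x₁ has been substituted by y)
        rcases h2 with heq | ⟨hda2, hx2d, _⟩ | ⟨hdb2, hx2d, _⟩
        · exact hne heq
        · rcases hx₁.1 with hx1' | hx1'
          · refine hSS y x₂ (mem_deltaTilde_iff.mp hx1').1 (mem_deltaTilde_iff.mp hx2d).1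
              hne ?_
            rw [dist_comm]; linarith
          · refine hcross x₂ y hx2d (mem_deltaTilde_iff.mp hx1').1 ?_
            rw [dist_comm] at hda2; linarith
        · rcases hx₁.1 with hx1' | hx1'
          · exact hcross' x₂ y hx2d (mem_deltaTilde_iff.mp hx1').1
              (by rw [dist_comm] at hdb2; linarith)
          · refine hSS'' y x₂ (mem_deltaTilde_iff.mp hx1').1 (mem_deltaTilde_iff.mp hx2d).1
              hne ?_
            rw [dist_comm]; linarith
      · -- x₁ ∈ Δ̃(S,S''), dist x₁ y ≤ a, y ∈ S'
        rcases h2 with rfl | ⟨hda2, hx2d, _⟩ | ⟨hdb2, hx2d, _⟩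
        · -- y = x₂ (x₂ substituted by y)
          rcases hx₂.1 with hx2' | hx2'
          · exact hSS x₁ y (mem_deltaTilde_iff.mp hx1d).1 (mem_deltaTilde_iff.mp hx2').1
              hne (by linarith)
          · exact hcross x₁ y hx1d (mem_deltaTilde_iff.mp hx2').1
              (by rw [dist_comm] at hda1; linarith)
        · refine hSS x₁ x₂ (mem_deltaTilde_iff.mp hx1d).1 (mem_deltaTilde_iff.mp hx2d).1
            hne ?_
          calc dist x₁ x₂ ≤ dist x₁ y + dist y x₂ := dist_triangle _ _ _
            _ < r := by rw [dist_comm y x₂]; linarith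
        · refine hcross x₁ x₂ hx1d (mem_deltaTilde_iff.mp hx2d).1 ?_
          calc dist x₂ x₁ ≤ dist x₂ y + dist y x₁ := dist_triangle _ _ _
            _ ≤ a + b := by rw [dist_comm y x₁]; linarith
      · -- x₁ ∈ Δ̃(S'',S), dist x₁ y ≤ b, y ∈ S'
        rcases h2 with rfl | ⟨hda2, hx2d, _⟩ | ⟨hdb2, hx2d, _⟩
        · rcases hx₂.1 with hx2' | hx2'
          · exact hcross y x₁ hx2' (mem_deltaTilde_iff.mp hx1d).1 (by linarith)
          · exact hSS'' x₁ y (mem_deltaTilde_iff.mp hx1d).1 (mem_deltaTilde_iff.mp hx2').1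
              hne (by linarith)
        · refine hcross x₂ x₁ hx2d (mem_deltaTilde_iff.mp hx1d).1 ?_
          calc dist x₁ x₂ ≤ dist x₁ y + dist y x₂ := dist_triangle _ _ _
            _ ≤ a + b := by rw [dist_comm y x₂]; linarith
        · refine hSS'' x₁ x₂ (mem_deltaTilde_iff.mp hx1d).1 (mem_deltaTilde_iff.mp hx2d).1
            hne ?_
          calc dist x₁ x₂ ≤ dist x₁ y + dist y x₂ := dist_triangle _ _ _
            _ < r := by rw [dist_comm y x₂]; linarith
    intro x₁ hx₁ x₂ hx₂ hfe
    exact main x₁ hx₁ x₂ hx₂ (f x₁) (hfP x₁ hx₁) (hfe ▸ hfP x₂ hx₂)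
  exact Set.ncard_le_ncard_of_injOn f hfU hinj (hfin (R + max a b))

lemma delta_self {a : ℝ} (ha : 0 ≤ a) (S : Set E) : delta a S S = ∅ := by
  rw [Set.eq_empty_iff_forall_notMem]
  rintro x (hx | hx) <;>
  · obtain ⟨hxS, h⟩ := mem_deltaTilde_iff.mp hx
    exact h x hxS (by simp [ha])

lemma add_mem_DbarSet {r a b : ℝ} {S S' S'' : Set E} (hr : 0 < r)
    (hS : UniformlyDiscreteSet r S) (hS' : UniformlyDiscreteSet r S')
    (hS'' : UniformlyDiscreteSet r S'')
    (haD : a ∈ DbarSet S S') (hbD : b ∈ DbarSet S' S'') (ha2 : a < r / 2) (hb2 : b < r / 2) :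
    a + b ∈ DbarSet S S'' := by
  obtain ⟨ha, hda⟩ := haD
  obtain ⟨hb, hdb⟩ := hbD
  have hfin1 := delta_inter_finite hr hS hS' a
  have hfin2 := delta_inter_finite hr hS' hS'' b
  have hfinU : ∀ R : ℝ, ((delta a S S' ∪ delta b S' S'') ∩ closedBall (0 : E) R).Finite := by
    intro R
    refine ((hfin1 R).union (hfin2 R)).subset ?_
    rw [Set.union_inter_distrib_right]
  refine ⟨by linarith, ?_⟩
  calc densSup (delta (a + b) S S'')
      ≤ densSup (delta a S S' ∪ delta b S' S'') :=
        densSup_le_of_ncard_le (le_max_of_le_left ha.le) fun R _ =>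
          ncard_delta_triangle_le hS hS'' ha hb ha2 hb2 hfinU R
    _ ≤ densSup (delta a S S') + densSup (delta b S' S'') := densSup_union_le hfin1 hfin2
    _ ≤ ENNReal.ofReal a + ENNReal.ofReal b := add_le_add hda hdb
    _ = ENNReal.ofReal (a + b) := (ENNReal.ofReal_add ha.le hb.le).symm

/-- `D̄(S,S')` is a half line unbounded to the right, and `d̄` is a
translation-invariant pseudometric on `U_r`. -/
theorem dbar_pseudometric {r : ℝ} (hr : 0 < r)
    (S S' S'' : Set (EuclideanSpace ℝ (Fin n)))
    (hS : UniformlyDiscreteSet r S) (hS' : UniformlyDiscreteSet r S')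
    (hS'' : UniformlyDiscreteSet r S'') :
    (∀ a ∈ DbarSet S S', ∀ b : ℝ, a ≤ b → b ∈ DbarSet S S') ∧
      0 ≤ dbar r S S' ∧ dbar r S S = 0 ∧ dbar r S S' = dbar r S' S ∧
      dbar r S S'' ≤ dbar r S S' + dbar r S' S'' ∧
      ∀ u : EuclideanSpace ℝ (Fin n),
        dbar r (translateSet u S) (translateSet u S') = dbar r S S' := by
  have hbdd : ∀ T T' : Set E, BddBelow (insert (r / 2) (DbarSet T T')) := by
    intro T T'
    refine ⟨0, ?_⟩
    rintro x (rfl | hx)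
    · linarith
    · exact hx.1.le
  have hnonneg : ∀ T T' : Set E, 0 ≤ dbar r T T' := by
    intro T T'
    apply Real.sInf_nonneg
    rintro x (rfl | hx)
    · linarith
    · exact hx.1.le
  have hhalf : ∀ T T' : Set E, dbar r T T' ≤ r / 2 := fun T T' =>
    csInf_le (hbdd T T') (mem_insert _ _)
  -- Part 1 : upward closed
  have part1 : ∀ a ∈ DbarSet S S', ∀ b : ℝ, a ≤ b → b ∈ DbarSet S S' := by
    rintro a ⟨ha, hda⟩ b hab
    refine ⟨lt_of_lt_of_le ha hab, ?_⟩
    calc densSup (delta b S S')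
        ≤ densSup (delta a S S') :=
          densSup_mono (delta_inter_finite hr hS hS' a) (delta_anti hab S S')
      _ ≤ ENNReal.ofReal a := hda
      _ ≤ ENNReal.ofReal b := ENNReal.ofReal_le_ofReal hab
  -- Part 3 : dbar r S S = 0
  have hzero : dbar r S S = 0 := by
    refine le_antisymm ?_ (hnonneg S S)
    have hle : ∀ ε : ℝ, 0 < ε → dbar r S S ≤ ε := by
      intro ε hε
      rcases le_or_gt (r / 2) ε with h | h
      · exact (hhalf S S).trans h
      · refine csInf_le (hbdd S S) (mem_insert_of_mem _ ?_)
        refine ⟨hε, ?_⟩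
        rw [delta_self hε.le S, densSup_empty]
        exact zero_le
    by_contra hpos
    push_neg at hpos
    have := hle (dbar r S S / 2) (by linarith)
    linarith
  -- Part 4 : symmetry
  have hDsymm : DbarSet S S' = DbarSet S' S := by
    have hst : ∀ a : ℝ, delta a S S' = delta a S' S := fun a => Set.union_comm _ _
    unfold DbarSet
    ext a
    simp only [mem_setOf_eq, hst]
  have hsymm : dbar r S S' = dbar r S' S := by
    unfold dbar
    rw [hDsymm]
  -- Part 5 : triangle inequality
  have htri : dbar r S S'' ≤ dbar r S S' + dbar r S' S'' := by
    rcases le_or_gt (r / 2) (dbar r S S' + dbar r S' S'') with h | h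
    · exact (hhalf S S'').trans h
    · refine le_of_forall_pos_le_add fun ε hε => ?_
      have h1nn := hnonneg S S'
      have h2nn := hnonneg S' S''
      set ε' := min (ε / 2) ((r / 2 - (dbar r S S' + dbar r S' S'')) / 2) with hε'def
      have hε'pos : 0 < ε' := lt_min (by linarith) (by linarith)
      have hε'le : ε' ≤ (r / 2 - (dbar r S S' + dbar r S' S'')) / 2 := min_le_right _ _
      have hε'le2 : ε' ≤ ε / 2 := min_le_left _ _
      have h1lt : dbar r S S' + ε' < r / 2 := by linarith
      have h2lt : dbar r S' S'' + ε' < r / 2 := by linarith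
      obtain ⟨a0, ha0mem, ha0lt⟩ := (csInf_lt_iff (hbdd S S') ⟨r / 2, mem_insert _ _⟩).mp
        (show sInf (insert (r / 2) (DbarSet S S')) < dbar r S S' + ε' by
          change dbar r S S' < _
          linarith)
      obtain ⟨b0, hb0mem, hb0lt⟩ := (csInf_lt_iff (hbdd S' S'') ⟨r / 2, mem_insert _ _⟩).mp
        (show sInf (insert (r / 2) (DbarSet S' S'')) < dbar r S' S'' + ε' by
          change dbar r S' S'' < _
          linarith)
      have ha0D : a0 ∈ DbarSet S S' := by
        rcases ha0mem with rfl | h'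
        · linarith
        · exact h'
      have hb0D : b0 ∈ DbarSet S' S'' := by
        rcases hb0mem with rfl | h'
        · linarith
        · exact h'
      have hsum := add_mem_DbarSet hr hS hS' hS'' ha0D hb0D (by linarith) (by linarith)
      have hle3 : dbar r S S'' ≤ a0 + b0 := csInf_le (hbdd S S'') (mem_insert_of_mem _ hsum)
      linarith
  -- Part 6 : translation invariance
  have htrans : ∀ u : E, dbar r (translateSet u S) (translateSet u S') = dbar r S S' := by
    intro u
    have hdens : ∀ a : ℝ,
        densSup (delta a (translateSet u S) (translateSet u S')) = densSup (delta a S S') := by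
      intro a
      rw [delta_translate]
      refine le_antisymm (densSup_translate_le u (delta_inter_finite hr hS hS' a)) ?_
      have hfin' : ∀ R : ℝ, (translateSet u (delta a S S') ∩ closedBall (0 : E) R).Finite := by
        intro R
        rw [← delta_translate]
        exact delta_inter_finite hr (hS.translate u) (hS'.translate u) a R
      have hback : translateSet (-u) (translateSet u (delta a S S')) = delta a S S' := by
        rw [translateSet_translateSet]
        rw [add_neg_cancel, translateSet_zero]
      calc densSup (delta a S S')
          = densSup (translateSet (-u) (translateSet u (delta a S S'))) := by rw [hback]
        _ ≤ densSup (translateSet u (delta a S S')) := densSup_translate_le (-u) hfin'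
    have hDeq : DbarSet (translateSet u S) (translateSet u S') = DbarSet S S' := by
      unfold DbarSet
      ext a
      simp only [mem_setOf_eq, hdens]
    unfold dbar
    rw [hDeq]
  exact ⟨part1, hnonneg S S', hzero, hsymm, htri, htrans⟩
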